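/- Let n ≥ 1 and k ≥ 1 be integers, and let S(x) := x^n R(x), where R is a real polynomial of degree at most k. Then for every x ∈ [0, 1 − 10k/n], one has |S(x)| ≤ x^{n/2} · ‖S‖_{[0,1]}. (If 1 − 10k/n < 0 the statement is vacuous.) -/
import Mathlib

open Polynomial Real

noncomputable def cheb : ℕ → Polynomial ℝ
  | 0 => 1
  | 1 => X
  | (n+2) => 2*X*cheb (n+1) - cheb n

lemma cheb_natDegree_le : ∀ n, (cheb n).natDegree ≤ n := by
  intro n
  induction n using Nat.twoStepInduction with
  | zero => simp [cheb]
  | one => simp [cheb]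
  | more n ih1 ih2 =>
    show (2*X*cheb (n+1) - cheb n).natDegree ≤ n + 2
    refine (natDegree_sub_le _ _).trans (max_le ?_ (ih1.trans (by omega)))
    calc (2*X*cheb (n+1)).natDegree ≤ (2*X : ℝ[X]).natDegree + (cheb (n+1)).natDegree :=
          natDegree_mul_le
      _ ≤ 1 + (n+1) := by
          gcongr
          · calc ((2:ℝ[X])*X).natDegree ≤ (2:ℝ[X]).natDegree + X.natDegree := natDegree_mul_le
              _ ≤ 1 := by simp
      _ = n + 2 := by omega

lemma cheb_eval_cos (θ : ℝ) : ∀ n, (cheb n).eval (Real.cos θ) = Real.cos (n * θ) := by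
  intro n
  induction n using Nat.twoStepInduction with
  | zero => simp [cheb]
  | one => simp [cheb]
  | more n ih1 ih2 =>
    show (2*X*cheb (n+1) - cheb n).eval _ = _
    have h1 : ((n:ℝ)+2) * θ = ((n+1) * θ) + θ := by ring
    have h2 : (n:ℝ) * θ = ((n+1) * θ) - θ := by ring
    push_cast
    rw [eval_sub, eval_mul, eval_mul, eval_X, eval_ofNat, ih1, ih2, h1, h2,
      Real.cos_add, Real.cos_sub]
    push_cast
    ring

lemma cheb_eval_facts {y : ℝ} (hy : 1 ≤ y) :
    ∀ n, 1 ≤ (cheb n).eval y ∧ (cheb n).eval y ≤ (cheb (n+1)).eval y ∧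
      (cheb (n+1)).eval y ≤ (2*y)^(n+1) := by
  intro n
  induction n with
  | zero =>
    refine ⟨by simp [cheb], by simp [cheb]; linarith, ?_⟩
    show X.eval y ≤ (2*y)^1
    simp; linarith
  | succ n ih =>
    obtain ⟨h1, h2, h3⟩ := ih
    have h1' : 1 ≤ (cheb (n+1)).eval y := h1.trans h2
    have he : (cheb (n+2)).eval y = 2*y*(cheb (n+1)).eval y - (cheb n).eval y := by
      show (2*X*cheb (n+1) - cheb n).eval y = _
      simp
    refine ⟨h1', ?_, ?_⟩
    · rw [he]; nlinarith
    · rw [he]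
      have : (2*y)^(n+1+1) = 2*y*(2*y)^(n+1) := by ring
      rw [this]
      nlinarith

lemma cheb_eval_le {y : ℝ} (hy : 1 ≤ y) (n : ℕ) : (cheb n).eval y ≤ (2*y)^n := by
  cases n with
  | zero => simp [cheb]
  | succ n => exact (cheb_eval_facts hy n).2.2

lemma growth_lemma (k : ℕ) (hk : 1 ≤ k) (p : Polynomial ℝ) (hp : p.natDegree ≤ k) (C : ℝ)
    (hC : ∀ s ∈ Set.Icc (-1:ℝ) 1, |p.eval s| ≤ C) (y : ℝ) (hy : 1 ≤ y) :
    |p.eval y| ≤ (2*y)^k * C := by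
  have hkR : (0:ℝ) < k := by positivity
  set v : ℕ → ℝ := fun j => Real.cos (j * π / k) with hv
  set s : Finset ℕ := Finset.range (k+1) with hs
  -- nodes are in [-1, 1]
  have hv1 : ∀ j, -1 ≤ v j ∧ v j ≤ 1 := fun j => ⟨Real.neg_one_le_cos _, Real.cos_le_one _⟩
  -- strict anti-monotonicity
  have hmono : ∀ i j : ℕ, i < j → j ≤ k → v j < v i := by
    intro i j hij hjk
    have hij' : (i:ℝ) * π / k < (j:ℝ) * π / k := by
      have : (i:ℝ) < j := by exact_mod_cast hij
      have := Real.pi_pos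
      gcongr
    refine Real.strictAntiOn_cos ⟨?_, ?_⟩ ⟨?_, ?_⟩ hij'
    · positivity
    · rw [div_le_iff₀ hkR]
      have : (i:ℝ) ≤ k := by exact_mod_cast hij.le.trans hjk
      nlinarith [Real.pi_pos]
    · positivity
    · rw [div_le_iff₀ hkR]
      have : (j:ℝ) ≤ k := by exact_mod_cast hjk
      nlinarith [Real.pi_pos]
  have hinj : Set.InjOn v s := by
    intro i hi j hj hij
    simp only [hs, Finset.coe_range, Set.mem_Iio] at hi hj
    rcases lt_trichotomy i j with h | h | h
    · exact absurd hij (ne_of_gt (hmono i j h (by omega)))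
    · exact h
    · exact absurd hij (ne_of_lt (hmono j i h (by omega)))
  have hcard : (s.card : WithBot ℕ) = (k+1 : ℕ) := by rw [hs, Finset.card_range]
  -- values of cheb k at nodes
  have hchebnode : ∀ j : ℕ, (cheb k).eval (v j) = (-1:ℝ)^j := by
    intro j
    rw [hv]
    simp only []
    rw [cheb_eval_cos]
    have : (k:ℝ) * ((j:ℝ) * π / k) = j * π := by field_simp
    rw [this]
    have := Real.cos_nat_mul_pi_sub 0 j
    simpa using this
  -- sign of basis polynomials at y
  have hb : ∀ j, (Lagrange.basis s v j).eval y
      = ∏ i ∈ s.erase j, ((v j - v i)⁻¹ * (y - v i)) := by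
    intro j
    rw [Lagrange.basis, eval_prod]
    refine Finset.prod_congr rfl fun i _ => ?_
    rw [Lagrange.basisDivisor]
    simp
  have hsign : ∀ j ∈ s, |(Lagrange.basis s v j).eval y| = (-1:ℝ)^j * (Lagrange.basis s v j).eval y := by
    intro j hj
    have hjk : j ≤ k := by simpa [hs, Nat.lt_succ_iff] using hj
    have hsplit : s.erase j = Finset.range j ∪ Finset.Ico (j+1) (k+1) := by
      ext a
      simp only [Finset.mem_erase, Finset.mem_range, Finset.mem_union, Finset.mem_Ico, hs]
      omega
    have hdisj : Disjoint (Finset.range j) (Finset.Ico (j+1) (k+1)) := by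
      rw [Finset.disjoint_left]
      intro a ha hb
      simp only [Finset.mem_range] at ha
      simp only [Finset.mem_Ico] at hb
      omega
    have h2 : (0:ℝ) ≤ ∏ i ∈ Finset.Ico (j+1) (k+1), ((v j - v i)⁻¹ * (y - v i)) := by
      refine Finset.prod_nonneg fun i hi => ?_
      simp only [Finset.mem_Ico] at hi
      have h1 : 0 < v j - v i := by
        have := hmono j i (by omega) (by omega); linarith
      have h2 : 0 ≤ y - v i := by linarith [(hv1 i).2]
      positivity
    have h1 : ∏ i ∈ Finset.range j, (-((v j - v i)⁻¹ * (y - v i)))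
        = (-1:ℝ)^j * ∏ i ∈ Finset.range j, ((v j - v i)⁻¹ * (y - v i)) := by
      simp_rw [neg_eq_neg_one_mul ((v j - _)⁻¹ * (y - _))]
      rw [Finset.prod_mul_distrib, Finset.prod_const, Finset.card_range]
    have h1nn : (0:ℝ) ≤ ∏ i ∈ Finset.range j, (-((v j - v i)⁻¹ * (y - v i))) := by
      refine Finset.prod_nonneg fun i hi => ?_
      simp only [Finset.mem_range] at hi
      have hvv : v j < v i := hmono i j hi hjk
      have hnum : 0 ≤ y - v i := by linarith [(hv1 i).2]
      have hden : (v j - v i)⁻¹ ≤ 0 := inv_nonpos.mpr (by linarith)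
      nlinarith
    have hnn : 0 ≤ (-1:ℝ)^j * (Lagrange.basis s v j).eval y := by
      rw [hb, hsplit, Finset.prod_union hdisj, ← mul_assoc, ← h1]
      positivity
    have habs : |(-1:ℝ)^j * (Lagrange.basis s v j).eval y| = |(Lagrange.basis s v j).eval y| := by
      rw [abs_mul]; simp
    rw [← habs, abs_of_nonneg hnn]
  have hC0 : 0 ≤ C := (abs_nonneg _).trans (hC 1 ⟨by norm_num, le_rfl⟩)
  have hdeg : p.degree < (s.card : WithBot ℕ) := by
    rw [hcard]
    exact lt_of_le_of_lt degree_le_natDegree (by exact_mod_cast Nat.lt_succ_of_le hp)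
  have hrep := Lagrange.eq_interpolate hinj hdeg
  have heval : p.eval y = ∑ j ∈ s, p.eval (v j) * (Lagrange.basis s v j).eval y := by
    conv_lhs => rw [hrep]
    rw [Lagrange.interpolate_apply, eval_finset_sum]
    exact Finset.sum_congr rfl fun j _ => by rw [eval_mul, eval_C]
  have hchebrep := Lagrange.eq_interpolate (f := cheb k) hinj (by
    rw [hcard]
    exact lt_of_le_of_lt degree_le_natDegree
      (by exact_mod_cast Nat.lt_succ_of_le (cheb_natDegree_le k)))
  have hsum : ∑ j ∈ s, (-1:ℝ)^j * (Lagrange.basis s v j).eval y = (cheb k).eval y := by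
    conv_rhs => rw [hchebrep]
    rw [Lagrange.interpolate_apply, eval_finset_sum]
    exact (Finset.sum_congr rfl fun j _ => by rw [eval_mul, eval_C, hchebnode]).symm
  calc |p.eval y| = |∑ j ∈ s, p.eval (v j) * (Lagrange.basis s v j).eval y| := by rw [heval]
    _ ≤ ∑ j ∈ s, |p.eval (v j) * (Lagrange.basis s v j).eval y| := Finset.abs_sum_le_sum_abs _ _
    _ ≤ ∑ j ∈ s, C * ((-1:ℝ)^j * (Lagrange.basis s v j).eval y) := by
        refine Finset.sum_le_sum fun j hj => ?_
        rw [abs_mul, ← hsign j hj]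
        exact mul_le_mul_of_nonneg_right (hC _ ⟨(hv1 j).1, (hv1 j).2⟩) (abs_nonneg _)
    _ = C * (cheb k).eval y := by rw [← Finset.mul_sum, hsum]
    _ ≤ C * (2*y)^k := mul_le_mul_of_nonneg_left (cheb_eval_le hy k) hC0
    _ = (2*y)^k * C := mul_comm _ _

lemma log38_le : Real.log 38 ≤ 3.8 := by
  rw [Real.log_le_iff_le_exp (by norm_num)]
  have h0 : (3.8:ℝ) = 4 + (-0.2) := by norm_num
  rw [h0, Real.exp_add]
  have h1 : (2.7182818283:ℝ) < Real.exp 1 := Real.exp_one_gt_d9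
  have h2 : Real.exp ((4:ℕ):ℝ) = Real.exp 1 ^ (4:ℕ) := (Real.exp_one_pow 4).symm
  have h3 : (0.8:ℝ) ≤ Real.exp (-0.2) := by linarith [Real.add_one_le_exp (-0.2:ℝ)]
  have h4 : (2.7:ℝ)^(4:ℕ) ≤ Real.exp 1 ^ (4:ℕ) := pow_le_pow_left₀ (by norm_num) (by linarith) 4
  have h5 : Real.exp (4:ℝ) = Real.exp 1 ^ (4:ℕ) := by norm_num at h2 ⊢
  rw [h5]
  nlinarith [Real.exp_pos (-0.2:ℝ)]

lemma key_numeric (n k : ℕ) (δ : ℝ) (hn : 1 ≤ n) (hk : 1 ≤ k) (hδ0 : 0 < δ) (hδ1 : δ < 1)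
    (h : 10*(k:ℝ) ≤ n*δ) : (38:ℝ)^k * (Real.sqrt (1-δ))^n ≤ (1-δ/10)^n := by
  have hx0 : (0:ℝ) < 1 - δ := by linarith
  have ha0 : (0:ℝ) < 1 - δ/10 := by linarith
  have hu0 : (0:ℝ) < Real.sqrt (1-δ) := Real.sqrt_pos.mpr hx0
  rw [← Real.log_le_log_iff (by positivity) (by positivity)]
  rw [Real.log_mul (by positivity) (by positivity), Real.log_pow, Real.log_pow,
    Real.log_pow, Real.log_sqrt hx0.le]
  -- goal : k * log 38 + n * (log (1-δ) / 2) ≤ n * log (1-δ/10)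
  have hlogx : Real.log (1-δ) ≤ -δ := by
    have := Real.log_le_sub_one_of_pos hx0; linarith
  have hloga : -(δ/9) ≤ Real.log (1-δ/10) := by
    have h1 : Real.log (1-δ/10)⁻¹ ≤ (1-δ/10)⁻¹ - 1 :=
      Real.log_le_sub_one_of_pos (by positivity)
    have h2 : (1-δ/10)⁻¹ ≤ (10:ℝ)/9 := by
      rw [inv_le_comm₀ ha0 (by norm_num)]; linarith
    have h3 : Real.log (1-δ/10)⁻¹ = - Real.log (1-δ/10) := Real.log_inv _
    have h4 : (1-δ/10)⁻¹ * (1-δ/10) = 1 := inv_mul_cancel₀ ha0.ne'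
    nlinarith [mul_le_mul_of_nonneg_right h2 (by positivity : (0:ℝ) ≤ δ/10)]
  have hlog38 : Real.log 38 ≤ 3.8 := log38_le
  have hk38 : (k:ℝ) * Real.log 38 ≤ (k:ℝ) * 3.8 := by
    have : (0:ℝ) ≤ k := by positivity
    nlinarith
  have hnR : (0:ℝ) < n := by exact_mod_cast Nat.pos_of_ne_zero (by omega)
  nlinarith [mul_le_mul_of_nonneg_left hlogx (by positivity : (0:ℝ) ≤ (n:ℝ)),
    mul_le_mul_of_nonneg_left hloga (by positivity : (0:ℝ) ≤ (n:ℝ))]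

/-- Let `n ≥ 1` and `k ≥ 1` be integers, and let `S(x) := x^n R(x)` with `R` a real
polynomial of degree at most `k`. Then for every `x ∈ [0, 1 - 10k/n]`,
`|S(x)| ≤ x^(n/2) ‖S‖_{[0,1]}`. -/
theorem stmt_7 (n k : ℕ) (hn : 1 ≤ n) (hk : 1 ≤ k) (R : Polynomial ℝ)
    (hR : R.natDegree ≤ k) (x : ℝ)
    (hx : x ∈ Set.Icc (0:ℝ) (1 - 10 * (k : ℝ) / (n : ℝ))) :
    |x ^ n * R.eval x| ≤ x ^ ((n : ℝ) / 2) *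
      ⨆ t : Set.Icc (0:ℝ) 1, |(t : ℝ) ^ n * R.eval (t : ℝ)| := by
  obtain ⟨hx0, hx1⟩ := hx
  have hn0 : (0:ℝ) < n := by exact_mod_cast Nat.pos_of_ne_zero (by omega)
  set f : ℝ → ℝ := fun t => |t ^ n * R.eval t| with hf
  set M := ⨆ t : Set.Icc (0:ℝ) 1, |(t : ℝ) ^ n * R.eval (t : ℝ)| with hM
  have hcont : Continuous f := ((continuous_pow n).mul R.continuous).abs
  have hbdd : BddAbove (Set.range fun t : Set.Icc (0:ℝ) 1 => f ↑t) := by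
    have h1 : (Set.range fun t : Set.Icc (0:ℝ) 1 => f ↑t) = f '' Set.Icc 0 1 := by
      rw [show (fun t : Set.Icc (0:ℝ) 1 => f ↑t) = f ∘ (Subtype.val) from rfl,
        Set.range_comp, Subtype.range_coe]
    rw [h1]
    exact (isCompact_Icc.image hcont).bddAbove
  have hMle : ∀ t : ℝ, 0 ≤ t → t ≤ 1 → f t ≤ M := fun t h1 h2 =>
    le_ciSup hbdd (⟨t, h1, h2⟩ : Set.Icc (0:ℝ) 1)
  have hM0 : 0 ≤ M := le_trans (abs_nonneg _) (hMle 0 le_rfl zero_le_one)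
  rcases eq_or_lt_of_le hx0 with h0 | hxpos
  · rw [← h0, Real.zero_rpow (by positivity), zero_pow (by omega : n ≠ 0)]
    simp
  -- main case : x > 0
  set δ := 1 - x with hδ
  have hkn : 10 * (k:ℝ) ≤ n * δ := by
    have h1 : 10 * (k:ℝ) / n ≤ δ := by rw [hδ]; linarith
    calc 10*(k:ℝ) = (10*(k:ℝ)/n) * n := by field_simp
      _ ≤ δ * n := by
          exact mul_le_mul_of_nonneg_right h1 hn0.le
      _ = n * δ := mul_comm _ _
  have hδ0 : 0 < δ := by
    have hkR : (1:ℝ) ≤ (k:ℝ) := by exact_mod_cast hk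
    have h10 : (0:ℝ) < n*δ := by linarith
    rcases mul_pos_iff.mp h10 with ⟨_, h⟩ | ⟨h, _⟩
    · exact h
    · linarith
  have hδ1 : δ < 1 := by rw [hδ]; linarith
  set a := 1 - δ/10 with ha
  have ha9 : (9:ℝ)/10 ≤ a := by rw [ha]; linarith
  have ha0 : (0:ℝ) < a := lt_of_lt_of_le (by norm_num) ha9
  set L : Polynomial ℝ := Polynomial.C ((1+a)/2) - Polynomial.C ((1-a)/2) * Polynomial.X with hL
  have hLeval : ∀ s : ℝ, L.eval s = (1+a)/2 - (1-a)/2 * s := by intro s; simp [hL]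
  set q := R.comp L with hq
  have hqdeg : q.natDegree ≤ k := by
    rw [hq, Polynomial.natDegree_comp]
    have hLdeg : L.natDegree ≤ 1 := by
      refine (Polynomial.natDegree_sub_le _ _).trans (max_le (by simp) ?_)
      exact (Polynomial.natDegree_C_mul_le _ _).trans (by simp)
    calc R.natDegree * L.natDegree ≤ k * 1 := Nat.mul_le_mul hR hLdeg
      _ = k := by omega
  have hqb : ∀ s ∈ Set.Icc (-1:ℝ) 1, |q.eval s| ≤ M / a^n := by
    intro s hs
    rw [hq, Polynomial.eval_comp]
    set t := L.eval s with htdef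
    have ht1 : a ≤ t := by rw [htdef, hLeval]; nlinarith [hs.2]
    have ht2 : t ≤ 1 := by rw [htdef, hLeval]; nlinarith [hs.1]
    have ht0 : 0 ≤ t := le_trans ha0.le ht1
    have h1 : t^n * |R.eval t| ≤ M := by
      have h1' : |t^n * R.eval t| ≤ M := hMle t ht0 ht2
      rwa [abs_mul, abs_pow, abs_of_nonneg ht0] at h1'
    have h2 : a^n ≤ t^n := pow_le_pow_left₀ ha0.le ht1 n
    rw [le_div_iff₀ (by positivity)]
    nlinarith [abs_nonneg (R.eval t), pow_pos ha0 n]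
  have hgrow := growth_lemma k hk q hqdeg (M/a^n) hqb 19 (by norm_num)
  have hq19 : q.eval 19 = R.eval x := by
    rw [hq, Polynomial.eval_comp, hLeval]
    congr 1
    rw [ha, hδ]; ring
  rw [hq19] at hgrow
  have h38 : |R.eval x| ≤ 38^k * (M / a^n) := by
    have h382 : ((2:ℝ)*19)^k = 38^k := by norm_num
    rwa [h382] at hgrow
  have hkey : (38:ℝ)^k * (Real.sqrt x)^n ≤ a^n := by
    have hxδ : x = 1 - δ := by rw [hδ]; ring
    rw [hxδ, ha]
    exact key_numeric n k δ hn hk hδ0 hδ1 hkn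
  have hrpow : x ^ ((n:ℝ)/2) = (Real.sqrt x)^n := by
    rw [show ((n:ℝ)/2) = (1/2) * n by ring, Real.rpow_mul hx0, ← Real.sqrt_eq_rpow,
      Real.rpow_natCast]
  rw [hrpow, abs_mul, abs_pow, abs_of_nonneg hx0]
  have hxsq : x^n = (Real.sqrt x)^n * (Real.sqrt x)^n := by
    rw [← mul_pow, Real.mul_self_sqrt hx0]
  have hapos : (0:ℝ) < a^n := pow_pos ha0 n
  have hspos : (0:ℝ) ≤ (Real.sqrt x)^n := by positivity
  calc x^n * |R.eval x| ≤ x^n * (38^k * (M/a^n)) :=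
        mul_le_mul_of_nonneg_left h38 (by positivity)
    _ = (Real.sqrt x)^n * ((38^k * (Real.sqrt x)^n) * (M / a^n)) := by rw [hxsq]; ring
    _ ≤ (Real.sqrt x)^n * (a^n * (M / a^n)) := by
        refine mul_le_mul_of_nonneg_left ?_ hspos
        exact mul_le_mul_of_nonneg_right hkey (by positivity)
    _ = (Real.sqrt x)^n * M := by
        rw [mul_comm (a^n) (M/a^n), div_mul_cancel₀ M hapos.ne']
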